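/- Let $0 < r < R$, $\varepsilon > 0$ small, and let $V \in L^2(\mathbb{R}^3)^4$ be a solenoidal vector field with $\hat V$ supported in $\mathcal{C}_{r,R}$ and lying pointwise in the span of the eigenvectors $E_0(\xi), E_+^\varepsilon(\xi), E_-^\varepsilon(\xi)$. Then for $i \in \{0,+,-\}$ the spectral projections satisfy $\|\mathbb{P}_{i,\varepsilon} V\|_{L^2(\mathbb{R}^3)} \le C_{r,R} \|V\|_{L^2(\mathbb{R}^3)}$, where $C_{r,R}$ depends only on $r, R, \nu, \nu'$ and is bounded by $C(1 + R^N/r^N)$ for some finite $N$. -/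

import Mathlib

open MeasureTheory
open scoped ENNReal

noncomputable section

/-- `S_ε(ξ) = √(1 - ε²(ν-ν')²|ξ|⁶/(4|ξ_h|²))`. -/
def Sfun (ε ν ν' : ℝ) (ξ : EuclideanSpace ℝ (Fin 3)) : ℝ :=
  Real.sqrt (1 - ε ^ 2 * (ν - ν') ^ 2 * ‖ξ‖ ^ 6 / (4 * ((ξ 0) ^ 2 + (ξ 1) ^ 2)))

/-- `𝒮_ε^±(ξ) = S_ε(ξ) ± (i/2) ε (ν-ν') |ξ|³ / |ξ_h|` (sign `σ = ±1`). -/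
def ScalS (σ ε ν ν' : ℝ) (ξ : EuclideanSpace ℝ (Fin 3)) : ℂ :=
  (Sfun ε ν ν' ξ : ℂ) + (σ : ℂ) * Complex.I *
    ((ε * (ν - ν') * ‖ξ‖ ^ 3 / (2 * Real.sqrt ((ξ 0) ^ 2 + (ξ 1) ^ 2)) : ℝ) : ℂ)

/-- The non-oscillating eigenvector `E₀(ξ) = |ξ_h|⁻¹ (-ξ₂, ξ₁, 0, 0)ᵀ`. -/
def E0v (ξ : EuclideanSpace ℝ (Fin 3)) : EuclideanSpace ℂ (Fin 4) :=
  (WithLp.equiv 2 (Fin 4 → ℂ)).symm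
    ![((-(ξ 1) / Real.sqrt ((ξ 0) ^ 2 + (ξ 1) ^ 2) : ℝ) : ℂ),
      (((ξ 0) / Real.sqrt ((ξ 0) ^ 2 + (ξ 1) ^ 2) : ℝ) : ℂ), 0, 0]

/-- The oscillating eigenvectors `E_±^ε(ξ)` (sign `σ = ±1`). -/
def Epm (σ ε ν ν' : ℝ) (ξ : EuclideanSpace ℝ (Fin 3)) : EuclideanSpace ℂ (Fin 4) :=
  (WithLp.equiv 2 (Fin 4 → ℂ)).symm
    ![(σ : ℂ) * Complex.I *
        (((ξ 2) * (ξ 0) / (‖ξ‖ * Real.sqrt ((ξ 0) ^ 2 + (ξ 1) ^ 2)) : ℝ) : ℂ) * ScalS σ ε ν ν' ξ,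
      (σ : ℂ) * Complex.I *
        (((ξ 2) * (ξ 1) / (‖ξ‖ * Real.sqrt ((ξ 0) ^ 2 + (ξ 1) ^ 2)) : ℝ) : ℂ) * ScalS σ ε ν ν' ξ,
      -(σ : ℂ) * Complex.I *
        ((Real.sqrt ((ξ 0) ^ 2 + (ξ 1) ^ 2) / ‖ξ‖ : ℝ) : ℂ) * ScalS σ ε ν ν' ξ,
      1]

/- ### Auxiliary lemmas -/

lemma eucl_coord_le {𝕜 : Type*} [RCLike 𝕜] {n : Type*} [Fintype n]
    (x : EuclideanSpace 𝕜 n) (i : n) : ‖x i‖ ≤ ‖x‖ := by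
  rw [EuclideanSpace.norm_eq]
  have h1 : ‖x i‖ ^ 2 ≤ ∑ j, ‖x j‖ ^ 2 :=
    Finset.single_le_sum (f := fun j => ‖x j‖ ^ 2) (fun j _ => sq_nonneg _) (Finset.mem_univ i)
  calc ‖x i‖ = Real.sqrt (‖x i‖ ^ 2) := (Real.sqrt_sq (norm_nonneg _)).symm
    _ ≤ _ := Real.sqrt_le_sqrt h1

lemma eucl4_norm_le (x : EuclideanSpace ℂ (Fin 4)) (M : ℝ) (hM : 0 ≤ M)
    (h0 : ‖x 0‖ ≤ M) (h1 : ‖x 1‖ ≤ M) (h2 : ‖x 2‖ ≤ M) (h3 : ‖x 3‖ ≤ M) :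
    ‖x‖ ≤ 2 * M := by
  rw [EuclideanSpace.norm_eq]
  have hsum : ∑ i, ‖x i‖ ^ 2 ≤ (2 * M) ^ 2 := by
    rw [Fin.sum_univ_four]
    nlinarith [norm_nonneg (x 0), norm_nonneg (x 1), norm_nonneg (x 2), norm_nonneg (x 3)]
  calc Real.sqrt (∑ i, ‖x i‖ ^ 2) ≤ Real.sqrt ((2 * M) ^ 2) := Real.sqrt_le_sqrt hsum
    _ = 2 * M := Real.sqrt_sq (by linarith)

set_option maxHeartbeats 2000000 in
/-- The key pointwise bound. -/
lemma key_pointwise (r R ν ν' ε : ℝ) (hr : 0 < r) (hrR : r < R)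
    (ξ : EuclideanSpace ℝ (Fin 3))
    (hξ1 : r < Real.sqrt ((ξ 0) ^ 2 + (ξ 1) ^ 2)) (hξ2 : ‖ξ‖ < R)
    (hS : 1 / 2 ≤ Sfun ε ν ν' ξ) (k0 kp km : ℂ) :
    ‖k0 • E0v ξ‖ ≤ 8 * (1 + R / r) *
        ‖k0 • E0v ξ + kp • Epm 1 ε ν ν' ξ + km • Epm (-1) ε ν ν' ξ‖ ∧
    ‖kp • Epm 1 ε ν ν' ξ‖ ≤ 8 * (1 + R / r) *
        ‖k0 • E0v ξ + kp • Epm 1 ε ν ν' ξ + km • Epm (-1) ε ν ν' ξ‖ ∧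
    ‖km • Epm (-1) ε ν ν' ξ‖ ≤ 8 * (1 + R / r) *
        ‖k0 • E0v ξ + kp • Epm 1 ε ν ν' ξ + km • Epm (-1) ε ν ν' ξ‖ := by
  set V : EuclideanSpace ℂ (Fin 4) :=
    k0 • E0v ξ + kp • Epm 1 ε ν ν' ξ + km • Epm (-1) ε ν ν' ξ with hVdef
  have hH : 0 < Real.sqrt ((ξ 0) ^ 2 + (ξ 1) ^ 2) := hr.trans hξ1
  have hHsq : (Real.sqrt ((ξ 0) ^ 2 + (ξ 1) ^ 2)) ^ 2 = (ξ 0) ^ 2 + (ξ 1) ^ 2 :=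
    Real.sq_sqrt (by positivity)
  have hnorm3 : ‖ξ‖ = Real.sqrt ((ξ 0) ^ 2 + (ξ 1) ^ 2 + (ξ 2) ^ 2) := by
    rw [EuclideanSpace.norm_eq, Fin.sum_univ_three]
    simp [Real.norm_eq_abs, sq_abs]
  have hHn : Real.sqrt ((ξ 0) ^ 2 + (ξ 1) ^ 2) ≤ ‖ξ‖ := by
    rw [hnorm3]; exact Real.sqrt_le_sqrt (by nlinarith [sq_nonneg (ξ 2)])
  have hn : 0 < ‖ξ‖ := lt_of_lt_of_le hH hHn
  have hxi0 : |ξ 0| ≤ Real.sqrt ((ξ 0) ^ 2 + (ξ 1) ^ 2) := by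
    rw [← Real.sqrt_sq_eq_abs]; exact Real.sqrt_le_sqrt (by nlinarith [sq_nonneg (ξ 1)])
  have hxi1 : |ξ 1| ≤ Real.sqrt ((ξ 0) ^ 2 + (ξ 1) ^ 2) := by
    rw [← Real.sqrt_sq_eq_abs]; exact Real.sqrt_le_sqrt (by nlinarith [sq_nonneg (ξ 0)])
  have hxi2 : |ξ 2| ≤ ‖ξ‖ := by
    rw [hnorm3, ← Real.sqrt_sq_eq_abs]
    exact Real.sqrt_le_sqrt (by nlinarith [sq_nonneg (ξ 0), sq_nonneg (ξ 1)])
  have hne : ((Real.sqrt ((ξ 0) ^ 2 + (ξ 1) ^ 2) : ℝ) : ℂ) ≠ 0 := by exact_mod_cast hH.ne'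
  have nne : ((‖ξ‖ : ℝ) : ℂ) ≠ 0 := by exact_mod_cast hn.ne'
  -- bounds on S and the imaginary part b
  have hS0 : 0 ≤ Sfun ε ν ν' ξ := Real.sqrt_nonneg _
  have hS1 : Sfun ε ν ν' ξ ≤ 1 := by
    unfold Sfun
    have hx : 0 ≤ ε ^ 2 * (ν - ν') ^ 2 * ‖ξ‖ ^ 6 / (4 * ((ξ 0) ^ 2 + (ξ 1) ^ 2)) := by
      positivity
    calc Real.sqrt _ ≤ Real.sqrt 1 := Real.sqrt_le_sqrt (by linarith)
      _ = 1 := Real.sqrt_one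
  have hxle : ε ^ 2 * (ν - ν') ^ 2 * ‖ξ‖ ^ 6 / (4 * ((ξ 0) ^ 2 + (ξ 1) ^ 2)) ≤ 3 / 4 := by
    have := (Real.le_sqrt' (by norm_num : (0:ℝ) < 1/2)).mp hS
    linarith
  have hbb : |ε * (ν - ν') * ‖ξ‖ ^ 3 / (2 * Real.sqrt ((ξ 0) ^ 2 + (ξ 1) ^ 2))| ≤ 1 := by
    have hbsq : (ε * (ν - ν') * ‖ξ‖ ^ 3 / (2 * Real.sqrt ((ξ 0) ^ 2 + (ξ 1) ^ 2))) ^ 2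
        = ε ^ 2 * (ν - ν') ^ 2 * ‖ξ‖ ^ 6 / (4 * ((ξ 0) ^ 2 + (ξ 1) ^ 2)) := by
      rw [div_pow, mul_pow, mul_pow, mul_pow, hHsq]; ring_nf
    nlinarith [sq_abs (ε * (ν - ν') * ‖ξ‖ ^ 3 / (2 * Real.sqrt ((ξ 0) ^ 2 + (ξ 1) ^ 2))),
      abs_nonneg (ε * (ν - ν') * ‖ξ‖ ^ 3 / (2 * Real.sqrt ((ξ 0) ^ 2 + (ξ 1) ^ 2)))]
  have hSc : ∀ σ : ℝ, |σ| = 1 → ‖ScalS σ ε ν ν' ξ‖ ≤ 2 := by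
    intro σ hσ
    unfold ScalS
    refine (norm_add_le _ _).trans ?_
    rw [norm_mul, norm_mul]
    simp only [Complex.norm_real, Complex.norm_I, Real.norm_eq_abs]
    rw [hσ, abs_of_nonneg hS0]
    nlinarith [hbb, hS1]
  -- norm bounds on the eigenvectors
  have hE0 : ‖E0v ξ‖ ≤ 2 := by
    have h2 : (2:ℝ) = 2 * 1 := by norm_num
    rw [h2]
    refine eucl4_norm_le _ 1 zero_le_one ?_ ?_ ?_ ?_ <;>
      simp only [E0v, WithLp.equiv_symm_apply, PiLp.toLp_apply, Matrix.cons_val_zero, Matrix.cons_val_one,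
        Matrix.head_cons, Matrix.cons_val_two, Matrix.cons_val_three, Matrix.tail_cons,
        norm_zero, Complex.norm_real, Real.norm_eq_abs]
    · rw [abs_div, abs_neg, abs_of_pos hH, div_le_one hH]; exact hxi1
    · rw [abs_div, abs_of_pos hH, div_le_one hH]; exact hxi0
    · norm_num
    · norm_num
  have hEpm : ∀ σ : ℝ, |σ| = 1 → ‖Epm σ ε ν ν' ξ‖ ≤ 4 := by
    intro σ hσ
    have hprod : (0:ℝ) < ‖ξ‖ * Real.sqrt ((ξ 0) ^ 2 + (ξ 1) ^ 2) := by positivity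
    have hc0 : |ξ 2 * ξ 0 / (‖ξ‖ * Real.sqrt ((ξ 0) ^ 2 + (ξ 1) ^ 2))| ≤ 1 := by
      rw [abs_div, abs_mul, abs_of_pos hprod, div_le_one hprod]
      exact mul_le_mul hxi2 hxi0 (abs_nonneg _) (norm_nonneg _)
    have hc1 : |ξ 2 * ξ 1 / (‖ξ‖ * Real.sqrt ((ξ 0) ^ 2 + (ξ 1) ^ 2))| ≤ 1 := by
      rw [abs_div, abs_mul, abs_of_pos hprod, div_le_one hprod]
      exact mul_le_mul hxi2 hxi1 (abs_nonneg _) (norm_nonneg _)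
    have hc2 : |Real.sqrt ((ξ 0) ^ 2 + (ξ 1) ^ 2) / ‖ξ‖| ≤ 1 := by
      rw [abs_div, abs_of_pos hH, abs_of_pos hn, div_le_one hn]
      exact hHn
    have hSc' := hSc σ hσ
    have hScnn := norm_nonneg (ScalS σ ε ν ν' ξ)
    have h4 : (4 : ℝ) = 2 * 2 := by norm_num
    rw [h4]
    refine eucl4_norm_le _ 2 (by norm_num) ?_ ?_ ?_ ?_ <;>
      simp only [Epm, WithLp.equiv_symm_apply, PiLp.toLp_apply, Matrix.cons_val_zero, Matrix.cons_val_one,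
        Matrix.head_cons, Matrix.cons_val_two, Matrix.cons_val_three, Matrix.tail_cons]
    · rw [norm_mul, norm_mul, norm_mul]
      simp only [Complex.norm_real, Complex.norm_I, Real.norm_eq_abs]
      rw [hσ]
      nlinarith [abs_nonneg (ξ 2 * ξ 0 / (‖ξ‖ * Real.sqrt ((ξ 0) ^ 2 + (ξ 1) ^ 2)))]
    · rw [norm_mul, norm_mul, norm_mul]
      simp only [Complex.norm_real, Complex.norm_I, Real.norm_eq_abs]
      rw [hσ]
      nlinarith [abs_nonneg (ξ 2 * ξ 1 / (‖ξ‖ * Real.sqrt ((ξ 0) ^ 2 + (ξ 1) ^ 2)))]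
    · rw [norm_mul, norm_mul, norm_mul, norm_neg]
      simp only [Complex.norm_real, Complex.norm_I, Real.norm_eq_abs]
      rw [hσ]
      nlinarith [abs_nonneg (Real.sqrt ((ξ 0) ^ 2 + (ξ 1) ^ 2) / ‖ξ‖)]
    · norm_num
  -- component identities
  have compV : ∀ i, ‖V i‖ ≤ ‖V‖ := fun i => eucl_coord_le V i
  have Eq0 : (((-(ξ 1)) : ℝ) : ℂ) * (V 0) + (((ξ 0) : ℝ) : ℂ) * (V 1)
      = k0 * ((Real.sqrt ((ξ 0) ^ 2 + (ξ 1) ^ 2) : ℝ) : ℂ) := by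
    have hsq : ((Real.sqrt ((ξ 0) ^ 2 + (ξ 1) ^ 2) : ℝ) : ℂ) ^ 2
        = ((ξ 0 : ℝ) : ℂ) ^ 2 + ((ξ 1 : ℝ) : ℂ) ^ 2 := by
      exact_mod_cast congrArg (fun x : ℝ => (x : ℂ)) hHsq
    show (((-(ξ 1)) : ℝ) : ℂ) *
        (k0 * E0v ξ 0 + kp * Epm 1 ε ν ν' ξ 0 + km * Epm (-1) ε ν ν' ξ 0)
      + (((ξ 0) : ℝ) : ℂ) *
        (k0 * E0v ξ 1 + kp * Epm 1 ε ν ν' ξ 1 + km * Epm (-1) ε ν ν' ξ 1) = _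
    simp only [E0v, Epm, WithLp.equiv_symm_apply, PiLp.toLp_apply, Matrix.cons_val_zero, Matrix.cons_val_one,
      Matrix.head_cons]
    push_cast
    field_simp
    linear_combination (-k0 * ((‖ξ‖ : ℝ) : ℂ)) * hsq
  have Eq3 : V 3 = kp + km := by
    show k0 * E0v ξ 3 + kp * Epm 1 ε ν ν' ξ 3 + km * Epm (-1) ε ν ν' ξ 3 = _
    simp [E0v, Epm, WithLp.equiv_symm_apply, PiLp.toLp_apply]
  have Eq2 : V 2 = Complex.I *
      ((Real.sqrt ((ξ 0) ^ 2 + (ξ 1) ^ 2) / ‖ξ‖ : ℝ) : ℂ) *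
      (km * ScalS (-1) ε ν ν' ξ - kp * ScalS 1 ε ν ν' ξ) := by
    show k0 * E0v ξ 2 + kp * Epm 1 ε ν ν' ξ 2 + km * Epm (-1) ε ν ν' ξ 2 = _
    simp only [E0v, Epm, WithLp.equiv_symm_apply, PiLp.toLp_apply, Matrix.cons_val_zero, Matrix.cons_val_one,
      Matrix.head_cons, Matrix.cons_val_two, Matrix.tail_cons]
    push_cast
    ring
  have hSsum : ScalS 1 ε ν ν' ξ + ScalS (-1) ε ν ν' ξ = 2 * ((Sfun ε ν ν' ξ : ℝ) : ℂ) := by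
    unfold ScalS; push_cast; ring
  have hfrac : ((‖ξ‖ / Real.sqrt ((ξ 0) ^ 2 + (ξ 1) ^ 2) : ℝ) : ℂ) *
      ((Real.sqrt ((ξ 0) ^ 2 + (ξ 1) ^ 2) / ‖ξ‖ : ℝ) : ℂ) = 1 := by
    push_cast; field_simp
  have EqP : 2 * ((Sfun ε ν ν' ξ : ℝ) : ℂ) * kp =
      V 3 * ScalS (-1) ε ν ν' ξ +
        Complex.I * ((‖ξ‖ / Real.sqrt ((ξ 0) ^ 2 + (ξ 1) ^ 2) : ℝ) : ℂ) * V 2 := by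
    rw [Eq2, Eq3, ← hSsum]
    linear_combination (-(((‖ξ‖ / Real.sqrt ((ξ 0) ^ 2 + (ξ 1) ^ 2) : ℝ) : ℂ) *
        ((Real.sqrt ((ξ 0) ^ 2 + (ξ 1) ^ 2) / ‖ξ‖ : ℝ) : ℂ) *
        (km * ScalS (-1) ε ν ν' ξ - kp * ScalS 1 ε ν ν' ξ))) * Complex.I_sq +
      (km * ScalS (-1) ε ν ν' ξ - kp * ScalS 1 ε ν ν' ξ) * hfrac
  have EqM : 2 * ((Sfun ε ν ν' ξ : ℝ) : ℂ) * km =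
      V 3 * ScalS 1 ε ν ν' ξ -
        Complex.I * ((‖ξ‖ / Real.sqrt ((ξ 0) ^ 2 + (ξ 1) ^ 2) : ℝ) : ℂ) * V 2 := by
    rw [Eq2, Eq3, ← hSsum]
    linear_combination ((((‖ξ‖ / Real.sqrt ((ξ 0) ^ 2 + (ξ 1) ^ 2) : ℝ) : ℂ) *
        ((Real.sqrt ((ξ 0) ^ 2 + (ξ 1) ^ 2) / ‖ξ‖ : ℝ) : ℂ) *
        (km * ScalS (-1) ε ν ν' ξ - kp * ScalS 1 ε ν ν' ξ))) * Complex.I_sq +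
      (-(km * ScalS (-1) ε ν ν' ξ - kp * ScalS 1 ε ν ν' ξ)) * hfrac
  -- scalar bound for k0
  have hk0 : ‖k0‖ ≤ 2 * ‖V‖ := by
    have e1 : ‖k0‖ * Real.sqrt ((ξ 0) ^ 2 + (ξ 1) ^ 2)
        ≤ 2 * ‖V‖ * Real.sqrt ((ξ 0) ^ 2 + (ξ 1) ^ 2) := by
      calc ‖k0‖ * Real.sqrt ((ξ 0) ^ 2 + (ξ 1) ^ 2)
          = ‖k0 * ((Real.sqrt ((ξ 0) ^ 2 + (ξ 1) ^ 2) : ℝ) : ℂ)‖ := by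
            rw [norm_mul, Complex.norm_real, Real.norm_eq_abs, abs_of_pos hH]
        _ = ‖(((-(ξ 1)) : ℝ) : ℂ) * (V 0) + (((ξ 0) : ℝ) : ℂ) * (V 1)‖ := by rw [Eq0]
        _ ≤ ‖(((-(ξ 1)) : ℝ) : ℂ) * (V 0)‖ + ‖(((ξ 0) : ℝ) : ℂ) * (V 1)‖ := norm_add_le _ _
        _ = |ξ 1| * ‖V 0‖ + |ξ 0| * ‖V 1‖ := by
            rw [norm_mul, norm_mul, Complex.norm_real, Complex.norm_real,
              Real.norm_eq_abs, Real.norm_eq_abs, abs_neg]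
        _ ≤ Real.sqrt ((ξ 0) ^ 2 + (ξ 1) ^ 2) * ‖V‖
            + Real.sqrt ((ξ 0) ^ 2 + (ξ 1) ^ 2) * ‖V‖ := by
            have t1 : |ξ 1| * ‖V 0‖ ≤ Real.sqrt ((ξ 0) ^ 2 + (ξ 1) ^ 2) * ‖V‖ :=
              mul_le_mul hxi1 (compV 0) (norm_nonneg _) hH.le
            have t2 : |ξ 0| * ‖V 1‖ ≤ Real.sqrt ((ξ 0) ^ 2 + (ξ 1) ^ 2) * ‖V‖ :=
              mul_le_mul hxi0 (compV 1) (norm_nonneg _) hH.le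
            linarith
        _ = 2 * ‖V‖ * Real.sqrt ((ξ 0) ^ 2 + (ξ 1) ^ 2) := by ring
    exact le_of_mul_le_mul_right e1 hH
  -- scalar bounds for kp, km
  have hquot : ‖ξ‖ / Real.sqrt ((ξ 0) ^ 2 + (ξ 1) ^ 2) ≤ R / r :=
    div_le_div₀ (hr.trans hrR).le hξ2.le hr hξ1.le
  have hquot0 : (0:ℝ) ≤ ‖ξ‖ / Real.sqrt ((ξ 0) ^ 2 + (ξ 1) ^ 2) := by positivity
  have hkgen : ∀ k : ℂ, (2 * ((Sfun ε ν ν' ξ : ℝ) : ℂ) * k =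
      V 3 * ScalS (-1) ε ν ν' ξ +
        Complex.I * ((‖ξ‖ / Real.sqrt ((ξ 0) ^ 2 + (ξ 1) ^ 2) : ℝ) : ℂ) * V 2) ∨
      (2 * ((Sfun ε ν ν' ξ : ℝ) : ℂ) * k =
      V 3 * ScalS 1 ε ν ν' ξ -
        Complex.I * ((‖ξ‖ / Real.sqrt ((ξ 0) ^ 2 + (ξ 1) ^ 2) : ℝ) : ℂ) * V 2) →
      ‖k‖ ≤ (2 + R / r) * ‖V‖ := by
    intro k hk
    have hlhs : ‖k‖ ≤ ‖2 * ((Sfun ε ν ν' ξ : ℝ) : ℂ) * k‖ := by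
      rw [norm_mul, norm_mul, Complex.norm_real, Real.norm_eq_abs, abs_of_nonneg hS0]
      have : (1:ℝ) ≤ ‖(2:ℂ)‖ * Sfun ε ν ν' ξ := by
        rw [Complex.norm_ofNat]; linarith
      nlinarith [norm_nonneg k]
    have hrhs1 : ‖V 3 * ScalS (-1) ε ν ν' ξ +
        Complex.I * ((‖ξ‖ / Real.sqrt ((ξ 0) ^ 2 + (ξ 1) ^ 2) : ℝ) : ℂ) * V 2‖
        ≤ (2 + R / r) * ‖V‖ := by
      refine (norm_add_le _ _).trans ?_
      rw [norm_mul, norm_mul, norm_mul, Complex.norm_I, Complex.norm_real, Real.norm_eq_abs,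
        abs_of_nonneg hquot0, one_mul]
      have b1 : ‖V 3‖ * ‖ScalS (-1) ε ν ν' ξ‖ ≤ ‖V‖ * 2 :=
        mul_le_mul (compV 3) (hSc (-1) (by norm_num)) (norm_nonneg _) (norm_nonneg _)
      have b2 : ‖ξ‖ / Real.sqrt ((ξ 0) ^ 2 + (ξ 1) ^ 2) * ‖V 2‖ ≤ (R / r) * ‖V‖ :=
        mul_le_mul hquot (compV 2) (norm_nonneg _) (div_pos (hr.trans hrR) hr).le
      nlinarith [norm_nonneg V]
    have hrhs2 : ‖V 3 * ScalS 1 ε ν ν' ξ -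
        Complex.I * ((‖ξ‖ / Real.sqrt ((ξ 0) ^ 2 + (ξ 1) ^ 2) : ℝ) : ℂ) * V 2‖
        ≤ (2 + R / r) * ‖V‖ := by
      refine (norm_sub_le _ _).trans ?_
      rw [norm_mul, norm_mul, norm_mul, Complex.norm_I, Complex.norm_real, Real.norm_eq_abs,
        abs_of_nonneg hquot0, one_mul]
      have b1 : ‖V 3‖ * ‖ScalS 1 ε ν ν' ξ‖ ≤ ‖V‖ * 2 :=
        mul_le_mul (compV 3) (hSc 1 (by norm_num)) (norm_nonneg _) (norm_nonneg _)
      have b2 : ‖ξ‖ / Real.sqrt ((ξ 0) ^ 2 + (ξ 1) ^ 2) * ‖V 2‖ ≤ (R / r) * ‖V‖ :=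
        mul_le_mul hquot (compV 2) (norm_nonneg _) (div_pos (hr.trans hrR) hr).le
      nlinarith [norm_nonneg V]
    rcases hk with hk | hk
    · calc ‖k‖ ≤ ‖2 * ((Sfun ε ν ν' ξ : ℝ) : ℂ) * k‖ := hlhs
        _ = _ := by rw [hk]
        _ ≤ (2 + R / r) * ‖V‖ := hrhs1
    · calc ‖k‖ ≤ ‖2 * ((Sfun ε ν ν' ξ : ℝ) : ℂ) * k‖ := hlhs
        _ = _ := by rw [hk]
        _ ≤ (2 + R / r) * ‖V‖ := hrhs2
  have hkp : ‖kp‖ ≤ (2 + R / r) * ‖V‖ := hkgen kp (Or.inl EqP)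
  have hkm : ‖km‖ ≤ (2 + R / r) * ‖V‖ := hkgen km (Or.inr EqM)
  -- conclusion
  have hRr : 0 < R / r := div_pos (hr.trans hrR) hr
  have hVnn : 0 ≤ ‖V‖ := norm_nonneg _
  refine ⟨?_, ?_, ?_⟩
  · rw [norm_smul]
    have t1 : ‖k0‖ * ‖E0v ξ‖ ≤ (2 * ‖V‖) * 2 :=
      mul_le_mul hk0 hE0 (norm_nonneg _) (by positivity)
    nlinarith
  · rw [norm_smul]
    have t1 : ‖kp‖ * ‖Epm 1 ε ν ν' ξ‖ ≤ ((2 + R / r) * ‖V‖) * 4 :=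
      mul_le_mul hkp (hEpm 1 (by norm_num)) (norm_nonneg _) (by nlinarith)
    nlinarith
  · rw [norm_smul]
    have t1 : ‖km‖ * ‖Epm (-1) ε ν ν' ξ‖ ≤ ((2 + R / r) * ‖V‖) * 4 :=
      mul_le_mul hkm (hEpm (-1) (by norm_num)) (norm_nonneg _) (by nlinarith)
    nlinarith

/-- Boundedness of the spectral projections on `L²` for fields frequency-localized in
`C_{r,R}`: if `V̂ = k₀ E₀ + k₊ E₊^ε + k₋ E₋^ε` is supported in `C_{r,R}`, then
`‖𝓟_{i,ε} V‖_{L²} ≤ C_{r,R} ‖V‖_{L²}` with `C_{r,R} ≤ C (1 + R^N / r^N)`. -/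
theorem stmt_9 :
    ∃ (N : ℕ) (C0 : ℝ), 0 < C0 ∧
      ∀ (r R ν ν' ε : ℝ), 0 < r → r < R → 0 < ν → 0 < ν' → 0 < ε →
      ∀ k0 kp km : EuclideanSpace ℝ (Fin 3) → ℂ,
        (∀ ξ, ¬(r < Real.sqrt ((ξ 0) ^ 2 + (ξ 1) ^ 2) ∧ ‖ξ‖ < R) →
          k0 ξ = 0 ∧ kp ξ = 0 ∧ km ξ = 0) →
        (∀ ξ : EuclideanSpace ℝ (Fin 3),
          r < Real.sqrt ((ξ 0) ^ 2 + (ξ 1) ^ 2) → ‖ξ‖ < R → 1 / 2 ≤ Sfun ε ν ν' ξ) →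
        (let V : EuclideanSpace ℝ (Fin 3) → EuclideanSpace ℂ (Fin 4) := fun ξ =>
            k0 ξ • E0v ξ + kp ξ • Epm 1 ε ν ν' ξ + km ξ • Epm (-1) ε ν ν' ξ
         (∫⁻ ξ, ((‖k0 ξ • E0v ξ‖₊ : ℝ≥0∞)) ^ 2) ≤
            ENNReal.ofReal (C0 * (1 + R ^ N / r ^ N)) ^ 2 * ∫⁻ ξ, ((‖V ξ‖₊ : ℝ≥0∞)) ^ 2 ∧
         (∫⁻ ξ, ((‖kp ξ • Epm 1 ε ν ν' ξ‖₊ : ℝ≥0∞)) ^ 2) ≤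
            ENNReal.ofReal (C0 * (1 + R ^ N / r ^ N)) ^ 2 * ∫⁻ ξ, ((‖V ξ‖₊ : ℝ≥0∞)) ^ 2 ∧
         (∫⁻ ξ, ((‖km ξ • Epm (-1) ε ν ν' ξ‖₊ : ℝ≥0∞)) ^ 2) ≤
            ENNReal.ofReal (C0 * (1 + R ^ N / r ^ N)) ^ 2 * ∫⁻ ξ, ((‖V ξ‖₊ : ℝ≥0∞)) ^ 2) := by
  refine ⟨1, 8, by norm_num, ?_⟩
  intro r R ν ν' ε hr hrR hν hν' hε k0 kp km hsupp hS
  intro V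
  have hCnn : 0 ≤ 8 * (1 + R / r) := by
    have : 0 < R / r := div_pos (hr.trans hrR) hr
    nlinarith
  have key : ∀ (g : EuclideanSpace ℝ (Fin 3) → EuclideanSpace ℂ (Fin 4)),
      (∀ ξ, ‖g ξ‖ ≤ 8 * (1 + R / r) * ‖V ξ‖ ∨ g ξ = 0) →
      ∫⁻ ξ, ((‖g ξ‖₊ : ℝ≥0∞)) ^ 2 ≤
        ENNReal.ofReal (8 * (1 + R ^ 1 / r ^ 1)) ^ 2 * ∫⁻ ξ, ((‖V ξ‖₊ : ℝ≥0∞)) ^ 2 := by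
    intro g hg
    have hpt : ∀ ξ, ((‖g ξ‖₊ : ℝ≥0∞)) ^ 2 ≤
        ENNReal.ofReal (8 * (1 + R / r)) ^ 2 * ((‖V ξ‖₊ : ℝ≥0∞)) ^ 2 := by
      intro ξ
      rcases hg ξ with h | h
      · have e1 : ((‖g ξ‖₊ : ℝ≥0∞)) ≤ ENNReal.ofReal (8 * (1 + R / r)) * (‖V ξ‖₊ : ℝ≥0∞) := by
          rw [← enorm_eq_nnnorm, ← enorm_eq_nnnorm, ← ofReal_norm, ← ofReal_norm,
            ← ENNReal.ofReal_mul hCnn]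
          exact ENNReal.ofReal_le_ofReal h
        calc ((‖g ξ‖₊ : ℝ≥0∞)) ^ 2
            ≤ (ENNReal.ofReal (8 * (1 + R / r)) * (‖V ξ‖₊ : ℝ≥0∞)) ^ 2 := by
              rw [sq, sq]; exact mul_le_mul' e1 e1
          _ = _ := by rw [mul_pow]
      · simp [h]
    calc ∫⁻ ξ, ((‖g ξ‖₊ : ℝ≥0∞)) ^ 2
        ≤ ∫⁻ ξ, ENNReal.ofReal (8 * (1 + R / r)) ^ 2 * ((‖V ξ‖₊ : ℝ≥0∞)) ^ 2 :=
          lintegral_mono hpt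
      _ = ENNReal.ofReal (8 * (1 + R / r)) ^ 2 * ∫⁻ ξ, ((‖V ξ‖₊ : ℝ≥0∞)) ^ 2 :=
          lintegral_const_mul' _ _ (ENNReal.pow_ne_top ENNReal.ofReal_ne_top)
      _ = ENNReal.ofReal (8 * (1 + R ^ 1 / r ^ 1)) ^ 2 * ∫⁻ ξ, ((‖V ξ‖₊ : ℝ≥0∞)) ^ 2 := by
          rw [pow_one, pow_one]
  refine ⟨?_, ?_, ?_⟩
  · refine key (fun ξ => k0 ξ • E0v ξ) ?_
    intro ξ
    by_cases hξ : r < Real.sqrt ((ξ 0) ^ 2 + (ξ 1) ^ 2) ∧ ‖ξ‖ < R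
    · exact Or.inl (key_pointwise r R ν ν' ε hr hrR ξ hξ.1 hξ.2 (hS ξ hξ.1 hξ.2)
        (k0 ξ) (kp ξ) (km ξ)).1
    · exact Or.inr (by simp [(hsupp ξ hξ).1])
  · refine key (fun ξ => kp ξ • Epm 1 ε ν ν' ξ) ?_
    intro ξ
    by_cases hξ : r < Real.sqrt ((ξ 0) ^ 2 + (ξ 1) ^ 2) ∧ ‖ξ‖ < R
    · exact Or.inl (key_pointwise r R ν ν' ε hr hrR ξ hξ.1 hξ.2 (hS ξ hξ.1 hξ.2)
        (k0 ξ) (kp ξ) (km ξ)).2.1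
    · exact Or.inr (by simp [(hsupp ξ hξ).2.1])
  · refine key (fun ξ => km ξ • Epm (-1) ε ν ν' ξ) ?_
    intro ξ
    by_cases hξ : r < Real.sqrt ((ξ 0) ^ 2 + (ξ 1) ^ 2) ∧ ‖ξ‖ < R
    · exact Or.inl (key_pointwise r R ν ν' ε hr hrR ξ hξ.1 hξ.2 (hS ξ hξ.1 hξ.2)
        (k0 ξ) (kp ξ) (km ξ)).2.2
    · exact Or.inr (by simp [(hsupp ξ hξ).2.2])

end
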